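/- Let u_1,…,u_n and u*_1,…,u*_n be unit vectors in ℝ^d, let d_1,…,d_n > 0 be positive reals with ∑_{i=1}^n d_i u_i = 0, and let w ∈ ℝ^d be such that u_i − u*_i = w for every i. Then w = 0. -/

import Mathlib

open Finset

theorem stmt_12 {d n : ℕ} (hn : 0 < n)
    (u ustar : Fin n → EuclideanSpace ℝ (Fin d))
    (hu : ∀ i, ‖u i‖ = 1) (hustar : ∀ i, ‖ustar i‖ = 1)
    (dist : Fin n → ℝ) (hdist : ∀ i, 0 < dist i)
    (hsum : ∑ i, dist i • u i = 0)
    (w : EuclideanSpace ℝ (Fin d))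
    (hw : ∀ i, u i - ustar i = w) :
    w = 0 := by
  have key : ∀ i, inner ℝ (u i) w = ‖w‖^2 / 2 := by
    intro i
    have hst : ustar i = u i - w := by
      have := hw i; rw [← this]; abel
    have h1 : ‖u i - w‖ ^ 2 = 1 := by rw [← hst, hustar i]; norm_num
    rw [norm_sub_sq_real] at h1
    have h2 : ‖u i‖ = 1 := hu i
    nlinarith [h1, h2]
  have h0 : inner ℝ (∑ i, dist i • u i) w = (0 : ℝ) := by
    rw [hsum]; simp
  rw [sum_inner] at h0
  simp only [real_inner_smul_left, key] at h0
  rw [← Finset.sum_mul] at h0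
  have hpos : 0 < ∑ i, dist i :=
    Finset.sum_pos (fun i _ => hdist i) (Finset.univ_nonempty_iff.2 (Fin.pos_iff_nonempty.mp hn))
  have h1 : ‖w‖ ^ 2 / 2 = 0 := (mul_eq_zero.mp h0).resolve_left (ne_of_gt hpos)
  have hw2 : ‖w‖ = 0 := by nlinarith [norm_nonneg w]
  exact norm_eq_zero.mp hw2
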